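/- arXiv:1802.01223 — 2 statements merged into one kernel-verified Lean document; each statement's English description precedes it below -/
import Mathlib

section
/- Let Z be a nonnegative random variable with E[Z²] = 1 whose tail satisfies P(Z ≥ t) ≤ 2·exp(−c·t/K) for all t ≥ 0, where K ≥ 1/2 and c > 0. Then there exists a constant c₀ > 0 (depending only on c) such that E[Z] ≥ 1/(2·c₀·K·log₂(4K)). -/
open MeasureTheory

open Set in
lemma sqrtExpAux {b : ℝ} (hb : 0 < b) :
    IntegrableOn (fun t : ℝ => Real.exp (-b * Real.sqrt t)) (Set.Ioi 0) ∧
      ∫ t in Set.Ioi 0, Real.exp (-b * Real.sqrt t) = 2 / b ^ 2 := by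
  have base : IntegrableOn (fun x : ℝ => x ^ (1:ℝ) * Real.exp (-b * x ^ (1:ℝ)))
      (Set.Ioi 0) := integrableOn_rpow_mul_exp_neg_mul_rpow (by norm_num) one_pos hb
  have hEq : ∀ x ∈ Set.Ioi (0:ℝ),
      (|(2:ℝ)| * x ^ ((2:ℝ) - 1)) • Real.exp (-b * Real.sqrt (x ^ (2:ℝ)))
        = 2 * (x ^ (1:ℝ) * Real.exp (-b * x ^ (1:ℝ))) := by
    intro x hx
    have hx0 : (0:ℝ) ≤ x := (le_of_lt hx)
    have h2 : x ^ (2:ℝ) = x ^ 2 := by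
      rw [show (2:ℝ) = ((2:ℕ):ℝ) by norm_num, Real.rpow_natCast]
    rw [h2, Real.sqrt_sq hx0, smul_eq_mul,
      abs_of_nonneg (by norm_num : (0:ℝ) ≤ 2),
      show ((2:ℝ) - 1) = 1 by norm_num, Real.rpow_one]
    ring
  constructor
  · rw [← integrableOn_Ioi_comp_rpow_iff _ (two_ne_zero (α := ℝ))]
    exact IntegrableOn.congr_fun (base.const_mul 2)
      (fun x hx => (hEq x hx).symm) measurableSet_Ioi
  · rw [← integral_comp_rpow_Ioi (fun y => Real.exp (-b * Real.sqrt y))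
      (two_ne_zero (α := ℝ)),
      setIntegral_congr_fun measurableSet_Ioi hEq]
    have hval := Real.integral_rpow_mul_exp_neg_mul_Ioi (a := 2) (r := b)
      (by norm_num) hb
    have : ∫ x in Set.Ioi (0:ℝ), x ^ (1:ℝ) * Real.exp (-b * x ^ (1:ℝ))
        = (1 / b) ^ (2:ℝ) * Real.Gamma 2 := by
      rw [← hval]
      refine setIntegral_congr_fun measurableSet_Ioi (fun x hx => ?_)
      simp [Real.rpow_one]
      norm_num
    rw [integral_const_mul, this, Real.Gamma_two]
    rw [show ((1:ℝ) / b) ^ (2:ℝ) = (1 / b) ^ 2 by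
      rw [show (2:ℝ) = ((2:ℕ):ℝ) by norm_num, Real.rpow_natCast]]
    field_simp

set_option maxHeartbeats 2000000 in
/-- Lower bounding the first moment of a nonnegative random variable with unit second
moment and subexponential tail: there is a constant `c₀ > 0` depending only on `c` such
that `E[Z] ≥ 1 / (2 c₀ K log₂(4K))`. -/
theorem stmt4 (c : ℝ) (hc : 0 < c) :
    ∃ c₀ : ℝ, 0 < c₀ ∧
      ∀ (Ω : Type) [MeasurableSpace Ω] (μ : Measure Ω) [IsProbabilityMeasure μ]
        (Z : Ω → ℝ) (K : ℝ),
        Measurable Z → (∀ ω, 0 ≤ Z ω) →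
        (∫ ω, Z ω ^ 2 ∂μ) = 1 → 1 / 2 ≤ K →
        (∀ t : ℝ, 0 ≤ t → (μ {ω | t ≤ Z ω}).toReal ≤ 2 * Real.exp (-c * t / K)) →
        1 / (2 * c₀ * K * Real.logb 2 (4 * K)) ≤ ∫ ω, Z ω ∂μ := by
  have hloga : 0 ≤ Real.log (1 + 32 / c ^ 2) := by
    apply Real.log_nonneg; nlinarith [sq_nonneg c, div_nonneg (by norm_num : (0:ℝ) ≤ 32) (sq_nonneg c)]
  refine ⟨(2 / c) * (Real.log (1 + 32 / c ^ 2) + 2), by positivity, ?_⟩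
  intro Ω _ μ _ Z K hZmeas hZnn hZ2 hK hTail
  set c₀ : ℝ := (2 / c) * (Real.log (1 + 32 / c ^ 2) + 2) with hc₀def
  have hK0 : (0:ℝ) < K := lt_of_lt_of_le (by norm_num) hK
  set β : ℝ := c / (2 * K) with hβdef
  have hβ : 0 < β := by positivity
  have hD : (0:ℝ) < 1 + 32 * K ^ 2 / c ^ 2 := by positivity
  set M : ℝ := (2 * K / c) * Real.log (1 + 32 * K ^ 2 / c ^ 2) with hMdef
  have hlogD : 0 < Real.log (1 + 32 * K ^ 2 / c ^ 2) := by
    apply Real.log_pos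
    nlinarith [div_pos (by positivity : (0:ℝ) < 32 * K ^ 2) (by positivity : (0:ℝ) < c ^ 2)]
  have hM : 0 < M := by positivity
  -- integrability
  have hint2 : Integrable (fun ω => Z ω ^ 2) μ := by
    by_contra h
    rw [integral_undef h] at hZ2
    norm_num at hZ2
  have hint1 : Integrable Z μ := by
    refine (hint2.add (integrable_const 1)).mono' hZmeas.aestronglyMeasurable ?_
    refine Filter.Eventually.of_forall (fun ω => ?_)
    rw [Real.norm_eq_abs, abs_of_nonneg (hZnn ω)]
    simp only [Pi.add_apply]
    nlinarith [sq_nonneg (Z ω - 1)]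
  -- the truncated function
  set g : Ω → ℝ := fun ω => if M ≤ Z ω then Z ω ^ 2 else 0 with hgdef
  have hg_meas : Measurable g :=
    Measurable.ite (measurableSet_le measurable_const hZmeas) (hZmeas.pow_const 2)
      measurable_const
  have hg_nn : ∀ ω, 0 ≤ g ω := by
    intro ω; simp only [hgdef]; split <;> positivity
  have hg_int : Integrable g μ := by
    refine hint2.mono' hg_meas.aestronglyMeasurable ?_
    refine Filter.Eventually.of_forall (fun ω => ?_)
    rw [Real.norm_eq_abs, abs_of_nonneg (hg_nn ω)]
    simp only [hgdef]; split
    · exact le_refl _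
    · positivity
  -- tail bound : ∫ g ≤ 1/2
  have hg_half : ∫ ω, g ω ∂μ ≤ 1 / 2 := by
    rw [hg_int.integral_eq_integral_meas_lt (Filter.Eventually.of_forall hg_nn)]
    have hbd_int : IntegrableOn
        (fun t : ℝ => 2 * Real.exp (-β * M) * Real.exp (-β * Real.sqrt t))
        (Set.Ioi 0) := ((sqrtExpAux hβ).1.const_mul _)
    have hle : ∫ t in Set.Ioi (0:ℝ), (μ {ω | t < g ω}).toReal
        ≤ ∫ t in Set.Ioi (0:ℝ), 2 * Real.exp (-β * M) * Real.exp (-β * Real.sqrt t) := by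
      refine integral_mono_of_nonneg
        (Filter.Eventually.of_forall (fun t => ENNReal.toReal_nonneg)) hbd_int ?_
      rw [Filter.EventuallyLE, ae_restrict_iff' measurableSet_Ioi]
      refine Filter.Eventually.of_forall (fun t ht => ?_)
      have ht0 : (0:ℝ) < t := ht
      have hsub : {ω | t < g ω} ⊆ {ω | (M + Real.sqrt t) / 2 ≤ Z ω} := by
        intro ω hω
        simp only [Set.mem_setOf_eq] at hω ⊢
        by_cases h : M ≤ Z ω
        · simp only [hgdef, if_pos h] at hω
          have hs : Real.sqrt t ≤ Z ω := by
            have h1 := Real.sqrt_le_sqrt hω.le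
            rwa [Real.sqrt_sq (hZnn ω)] at h1
          linarith
        · simp only [hgdef, if_neg h] at hω
          linarith
      have harg : -c * ((M + Real.sqrt t) / 2) / K = -β * M + -β * Real.sqrt t := by
        rw [hβdef]; field_simp; ring
      calc (μ {ω | t < g ω}).toReal
          ≤ (μ {ω | (M + Real.sqrt t) / 2 ≤ Z ω}).toReal :=
            ENNReal.toReal_mono (measure_ne_top μ _) (measure_mono hsub)
        _ ≤ 2 * Real.exp (-c * ((M + Real.sqrt t) / 2) / K) :=
            hTail _ (by positivity)
        _ = 2 * Real.exp (-β * M) * Real.exp (-β * Real.sqrt t) := by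
            rw [harg, Real.exp_add]; ring
    refine hle.trans ?_
    rw [integral_const_mul, (sqrtExpAux hβ).2]
    have hβM : β * M = Real.log (1 + 32 * K ^ 2 / c ^ 2) := by
      rw [hβdef, hMdef]; field_simp
    have hexp : Real.exp (-β * M) = (1 + 32 * K ^ 2 / c ^ 2)⁻¹ := by
      rw [neg_mul, Real.exp_neg, hβM, Real.exp_log hD]
    have hβ2 : β ^ 2 = c ^ 2 / (4 * K ^ 2) := by rw [hβdef]; field_simp; ring
    have key : 2 * (1 + 32 * K ^ 2 / c ^ 2)⁻¹ * (2 / (c ^ 2 / (4 * K ^ 2)))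
        = 16 * K ^ 2 / (c ^ 2 + 32 * K ^ 2) := by
      rw [inv_eq_one_div]
      field_simp
      ring
    rw [hexp, hβ2, key, div_le_iff₀ (by positivity)]
    nlinarith [sq_nonneg c]
  -- pointwise truncation inequality
  have hpt : ∀ ω, Z ω ^ 2 ≤ M * Z ω + g ω := by
    intro ω
    by_cases h : M ≤ Z ω
    · simp only [hgdef, if_pos h]
      nlinarith [hZnn ω]
    · simp only [hgdef, if_neg h]
      nlinarith [hZnn ω]
  have hkey : (1:ℝ) ≤ M * ∫ ω, Z ω ∂μ + 1 / 2 := by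
    have h1 : ∫ ω, Z ω ^ 2 ∂μ ≤ ∫ ω, (M * Z ω + g ω) ∂μ :=
      integral_mono hint2 ((hint1.const_mul M).add hg_int) hpt
    rw [integral_add (hint1.const_mul M) hg_int, integral_const_mul] at h1
    rw [hZ2] at h1
    linarith
  have hEZ : 1 / (2 * M) ≤ ∫ ω, Z ω ∂μ := by
    rw [div_le_iff₀ (by positivity)]
    nlinarith
  -- compare M with c₀ K log₂(4K)
  have hlogb1 : 1 ≤ Real.logb 2 (4 * K) := by
    have : Real.logb 2 2 ≤ Real.logb 2 (4 * K) :=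
      Real.logb_le_logb_of_le one_lt_two (by norm_num) (by linarith)
    rwa [Real.logb_self_eq_one one_lt_two] at this
  have hlog2K : Real.log (2 * K) ≤ Real.logb 2 (4 * K) := by
    have h4K : (0:ℝ) < 4 * K := by positivity
    have h1 : Real.log (2 * K) ≤ Real.log (4 * K) :=
      Real.log_le_log (by positivity) (by linarith)
    have h2 : Real.log (4 * K) ≤ Real.logb 2 (4 * K) := by
      rw [Real.logb, le_div_iff₀ (Real.log_pos one_lt_two)]
      have hl2 : Real.log 2 ≤ 1 := by
        have := Real.log_le_sub_one_of_pos (by norm_num : (0:ℝ) < 2)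
        linarith
      have hnn : 0 ≤ Real.log (4 * K) := Real.log_nonneg (by linarith)
      nlinarith
    linarith
  have hlog1 : Real.log (1 + 32 * K ^ 2 / c ^ 2)
      ≤ Real.log (1 + 32 / c ^ 2) + 2 * Real.log (2 * K) := by
    have hineq : 1 + 32 * K ^ 2 / c ^ 2 ≤ (1 + 32 / c ^ 2) * (2 * K) ^ 2 := by
      have h4 : (1:ℝ) ≤ 4 * K ^ 2 := by nlinarith
      have hexpand : (1 + 32 / c ^ 2) * (2 * K) ^ 2
          = 4 * K ^ 2 + 32 * K ^ 2 / c ^ 2 + 96 * K ^ 2 / c ^ 2 := by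
        field_simp; ring
      have hpos96 : (0:ℝ) ≤ 96 * K ^ 2 / c ^ 2 := by positivity
      rw [hexpand]; linarith
    have h1 := Real.log_le_log hD hineq
    rw [Real.log_mul (by positivity) (by positivity), Real.log_pow] at h1
    push_cast at h1
    linarith
  have hMle : M ≤ c₀ * K * Real.logb 2 (4 * K) := by
    have h2 : Real.log (1 + 32 * K ^ 2 / c ^ 2)
        ≤ (Real.log (1 + 32 / c ^ 2) + 2) * Real.logb 2 (4 * K) := by
      have ha1 : Real.log (1 + 32 / c ^ 2) * 1
          ≤ Real.log (1 + 32 / c ^ 2) * Real.logb 2 (4 * K) :=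
        mul_le_mul_of_nonneg_left hlogb1 hloga
      rw [mul_one] at ha1
      nlinarith [hlog1, hlog2K]
    calc M ≤ (2 * K / c) * ((Real.log (1 + 32 / c ^ 2) + 2) * Real.logb 2 (4 * K)) := by
          rw [hMdef]; exact mul_le_mul_of_nonneg_left h2 (by positivity)
      _ = c₀ * K * Real.logb 2 (4 * K) := by rw [hc₀def]; field_simp
  have hfin : 1 / (2 * c₀ * K * Real.logb 2 (4 * K)) ≤ 1 / (2 * M) := by
    apply one_div_le_one_div_of_le (by positivity)
    nlinarith [hMle]
  exact hfin.trans hEZ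
end

section
/- Let H₁, H_r be symmetric matrices in ℝ^{N×N} with 0 ⪯ H₁ ⪯ α·I and ‖H_r‖ ≤ ε, let H = H₁ + H_r, and let z ∈ ℝ^N satisfy zᵀH₁z ≥ β‖z‖² for β ≥ 10ε and α ≥ β. Then with step size μ = 1/α, the vector ẑ = z − μ·H·z satisfies ‖ẑ‖² ≤ (1 − β/(2α))·‖z‖². -/
open Matrix RealInnerProductSpace

lemma stmt13_aux (α β ε nz a r b w : ℝ) (hα : 0 < α) (hβα : β ≤ α) (hεβ : 10 * ε ≤ β)
    (hε : 0 ≤ ε) (hnz : 0 ≤ nz) (hb : 0 ≤ b) (hw0 : 0 ≤ w)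
    (ha1 : β * nz ^ 2 ≤ a) (ha2 : a ≤ α * nz ^ 2) (hb2 : b ^ 2 ≤ α * a)
    (hw : w ≤ b + ε * nz) (hr : |r| ≤ ε * nz ^ 2) :
    nz ^ 2 - 2 * ((1 / α) * (a + r)) + ((1 / α) * w) ^ 2 ≤ (1 - β / (2 * α)) * nz ^ 2 := by
  obtain ⟨hr1, hr2⟩ := abs_le.mp hr
  have hbα : b ≤ α * nz := by nlinarith [mul_le_mul_of_nonneg_left ha2 hα.le, mul_nonneg hα.le hnz, hb, hb2]
  have hw2 : w ^ 2 ≤ (b + ε * nz) ^ 2 := by nlinarith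
  have key : α ^ 2 * (nz ^ 2 - 2 * ((1 / α) * (a + r)) + ((1 / α) * w) ^ 2) ≤
      α ^ 2 * ((1 - β / (2 * α)) * nz ^ 2) := by
    have e1 : α ^ 2 * (nz ^ 2 - 2 * ((1 / α) * (a + r)) + ((1 / α) * w) ^ 2) =
        α ^ 2 * nz ^ 2 - 2 * α * (a + r) + w ^ 2 := by field_simp
    have e2 : α ^ 2 * ((1 - β / (2 * α)) * nz ^ 2) =
        α ^ 2 * nz ^ 2 - α * β * nz ^ 2 / 2 := by field_simp
    rw [e1, e2]
    nlinarith [mul_nonneg (mul_nonneg hε hnz) (sub_nonneg.mpr hbα),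
      mul_nonneg (mul_nonneg hα.le (sq_nonneg nz)) (by linarith : (0:ℝ) ≤ β - 10 * ε),
      mul_nonneg (sq_nonneg nz) (mul_nonneg hε (by linarith : (0:ℝ) ≤ β - 10 * ε)),
      mul_nonneg (sq_nonneg nz) (mul_nonneg hε (by linarith : (0:ℝ) ≤ α - β)),
      mul_nonneg hα.le (by linarith : (0:ℝ) ≤ a - β * nz ^ 2),
      mul_nonneg hα.le (by linarith : (0:ℝ) ≤ r + ε * nz ^ 2), sq_nonneg nz]
  exact le_of_mul_le_mul_left key (pow_pos hα 2)

/-- One-step contraction of gradient descent: if `0 ⪯ H₁ ⪯ αI`, `‖H_r‖ ≤ ε`,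
`zᵀH₁z ≥ β‖z‖²`, `β ≥ 10ε` and `α ≥ β > 0`, then with step size `μ = 1/α`,
`‖z − μ(H₁+H_r)z‖² ≤ (1 − β/(2α))‖z‖²`. -/
theorem stmt13 (N : ℕ) (H₁ Hr : Matrix (Fin N) (Fin N) ℝ) (α β ε : ℝ)
    (hsym1 : H₁.IsSymm) (hsymr : Hr.IsSymm)
    (hpsd : H₁.PosSemidef)
    (hub : (α • (1 : Matrix (Fin N) (Fin N) ℝ) - H₁).PosSemidef)
    (hrnorm : ‖LinearMap.toContinuousLinearMap (Matrix.toEuclideanLin Hr)‖ ≤ ε)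
    (z : EuclideanSpace ℝ (Fin N))
    (hlow : β * ‖z‖ ^ 2 ≤ ⟪z, Matrix.toEuclideanLin H₁ z⟫)
    (hβε : 10 * ε ≤ β) (hαβ : β ≤ α) (hα : 0 < α) :
    ‖z - (1 / α) • (Matrix.toEuclideanLin (H₁ + Hr)) z‖ ^ 2 ≤
      (1 - β / (2 * α)) * ‖z‖ ^ 2 := by
  -- positivity of quadratic forms in inner-product language
  have hinner : ∀ (M : Matrix (Fin N) (Fin N) ℝ), M.PosSemidef →
      ∀ x : EuclideanSpace ℝ (Fin N), 0 ≤ ⟪x, Matrix.toEuclideanLin M x⟫ := by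
    intro M hM x
    simpa [EuclideanSpace.inner_eq_star_dotProduct, dotProduct_comm] using hM.dotProduct_mulVec_nonneg (WithLp.equiv 2 (Fin N → ℝ) x)
  have hmulapp : ∀ (M P : Matrix (Fin N) (Fin N) ℝ) (x : EuclideanSpace ℝ (Fin N)),
      Matrix.toEuclideanLin (M * P) x = Matrix.toEuclideanLin M (Matrix.toEuclideanLin P x) := by
    intro M P x
    simp [Matrix.toEuclideanLin_apply, Matrix.mulVec_mulVec]
  -- αH₁ - H₁² is PSD
  obtain ⟨S, hSh, hS⟩ : ∃ S : Matrix (Fin N) (Fin N) ℝ, Sᴴ = S ∧ S * S = H₁ :=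
    by open scoped MatrixOrder Matrix.Norms.L2Operator in exact
      ⟨CFC.sqrt H₁, (CFC.sqrt_nonneg H₁).posSemidef.isHermitian, CFC.sqrt_mul_sqrt_self H₁ hpsd.nonneg⟩
  have hkey : (α • H₁ - H₁ * H₁).PosSemidef := by
    have h0 := hub.conjTranspose_mul_mul_same S
    rw [hSh] at h0
    have h2 : S * (α • (1 : Matrix (Fin N) (Fin N) ℝ) - H₁) * S = α • H₁ - H₁ * H₁ := by
      rw [← hS]; noncomm_ring
    rwa [h2] at h0
  set A := Matrix.toEuclideanLin H₁ with hA
  set R := Matrix.toEuclideanLin Hr with hR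
  have hAsym : A.IsSymmetric := Matrix.isHermitian_iff_isSymmetric.mp hpsd.1
  set nz := ‖z‖ with hnz
  set a := ⟪z, A z⟫ with ha
  set r := ⟪z, R z⟫ with hrdef
  set b := ‖A z‖ with hb
  have hε0 : (0:ℝ) ≤ ε := le_trans (norm_nonneg _) hrnorm
  have haα : a ≤ α * nz ^ 2 := by
    have h := hinner _ hub z
    rw [map_sub, _root_.map_smul, LinearMap.sub_apply, LinearMap.smul_apply, inner_sub_right, inner_smul_right] at h
    have h1 : Matrix.toEuclideanLin (1 : Matrix (Fin N) (Fin N) ℝ) z = z := by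
      simp [Matrix.toEuclideanLin_apply]
    rw [h1, real_inner_self_eq_norm_sq] at h
    linarith [h]
  have hb2 : b ^ 2 ≤ α * a := by
    have h := hinner _ hkey z
    rw [map_sub, _root_.map_smul, LinearMap.sub_apply, LinearMap.smul_apply, inner_sub_right, inner_smul_right] at h
    have h1 : ⟪z, Matrix.toEuclideanLin (H₁ * H₁) z⟫ = b ^ 2 := by
      rw [hmulapp, ← hA, ← hAsym z (A z), real_inner_self_eq_norm_sq]
    rw [h1] at h
    linarith [h]
  have hRz : ‖R z‖ ≤ ε * nz := by
    have h := (LinearMap.toContinuousLinearMap R).le_opNorm z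
    simp only [LinearMap.coe_toContinuousLinearMap'] at h
    calc ‖R z‖ ≤ ‖LinearMap.toContinuousLinearMap R‖ * ‖z‖ := h
      _ ≤ ε * nz := by
        apply mul_le_mul_of_nonneg_right _ (norm_nonneg z)
        rw [hR]; exact hrnorm
  have hrabs : |r| ≤ ε * nz ^ 2 := by
    calc |r| ≤ ‖z‖ * ‖R z‖ := abs_real_inner_le_norm z (R z)
      _ ≤ nz * (ε * nz) := mul_le_mul_of_nonneg_left hRz (norm_nonneg z)
      _ = ε * nz ^ 2 := by ring
  -- expand the square
  have hadd : Matrix.toEuclideanLin (H₁ + Hr) z = A z + R z := by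
    rw [map_add]; rfl
  rw [hadd, @norm_sub_sq_real, inner_smul_right, norm_smul, inner_add_right]
  rw [← ha, ← hrdef]
  have hnsw : ‖(1 / α)‖ * ‖A z + R z‖ = (1/α) * ‖A z + R z‖ := by
    rw [Real.norm_eq_abs, abs_of_pos (by positivity)]
  rw [hnsw]
  have hw : ‖A z + R z‖ ≤ b + ε * nz := le_trans (norm_add_le _ _) (by linarith [hRz])
  exact stmt13_aux α β ε nz a r b ‖A z + R z‖ hα hαβ hβε hε0 (norm_nonneg z)
    (norm_nonneg _) (norm_nonneg _) hlow haα hb2 hw hrabs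
end
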